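/- arXiv:2110.02487 — 2 statements merged into one kernel-verified Lean document; each statement's English description precedes it below -/
import Mathlib

section
/- For even k, in the worst-case example graph G, the map i ↦ b_{i+j} (indices mod k+1) defines for each j ∈ {1,...,k} a perfect matching M_j of G given by M_j = ({{a_i, b_{i+j}} : i ∈ {1,...,k+1}} \ {{a_j, b_{2j}}}) ∪ {{a_j, w}, {b_{2j}, u}}, and the matchings M_1, ..., M_k are pairwise disjoint. -/
open scoped Classical

/-- A matching of `G`, given as a finite set of edges of `G` that are pairwise vertex-disjoint. -/
def IsMatchingE {V : Type*} (G : SimpleGraph V) (M : Finset (Sym2 V)) : Prop :=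
  ↑M ⊆ G.edgeSet ∧ (M : Set (Sym2 V)).Pairwise fun e f => ∀ v, v ∈ e → v ∉ f

/-- A maximum-cardinality matching of `G`. -/
def IsMaxMatchingE {V : Type*} (G : SimpleGraph V) (M : Finset (Sym2 V)) : Prop :=
  IsMatchingE G M ∧ ∀ M', IsMatchingE G M' → M'.card ≤ M.card

/-- An independent set of `G`. -/
def IsIndepF {V : Type*} (G : SimpleGraph V) (S : Finset V) : Prop :=
  ∀ v ∈ S, ∀ w ∈ S, ¬G.Adj v w

/-- A maximum-cardinality independent set of `G`. -/
def IsMaxIndepF {V : Type*} (G : SimpleGraph V) (S : Finset V) : Prop :=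
  IsIndepF G S ∧ ∀ S', IsIndepF G S' → S'.card ≤ S.card

/-- A `k`-dependent set: every vertex of the induced subgraph `G[S]` has degree at most `k`. -/
def KDepSet {V : Type*} (G : SimpleGraph V) (k : ℕ) (S : Finset V) : Prop :=
  ∀ v ∈ S, (S.filter fun w => G.Adj v w).card ≤ k

/-- The residual graph after deleting the matchings `M 0, ..., M (i-1)` from `G`. -/
def resid {V : Type*} (G : SimpleGraph V) (M : ℕ → Finset (Sym2 V)) (i : ℕ) : SimpleGraph V :=
  G.deleteEdges (⋃ j ∈ Set.Iio i, (M j : Set (Sym2 V)))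

/-- The vertex set of the worst-case example graph: `A ∪ {u}` on the left, `B ∪ {w}` on the right. -/
abbrev ExV (k : ℕ) := (Fin (k+1) ⊕ Unit) ⊕ (Fin (k+1) ⊕ Unit)

/-- The base relation of the worst-case example graph: `u ~ w`, `aᵢ ~ bⱼ` for `i ≠ j`,
`aᵢ ~ w` and `u ~ bⱼ` for all `i, j`. -/
def exRel (k : ℕ) : ExV k → ExV k → Prop
  | Sum.inl x, Sum.inr y =>
    match x, y with
    | Sum.inl i, Sum.inl j => i ≠ j
    | _, _ => True
  | _, _ => False

/-- The worst-case example bipartite graph. -/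
def exGraph (k : ℕ) : SimpleGraph (ExV k) := SimpleGraph.fromRel (exRel k)

open Fin.NatCast in
/-- The vertex `aᵢ` (index taken modulo `k+1`). -/
def aV (k : ℕ) (i : ℕ) : ExV k := Sum.inl (Sum.inl (i : Fin (k+1)))
open Fin.NatCast in
/-- The vertex `bᵢ` (index taken modulo `k+1`). -/
def bV (k : ℕ) (i : ℕ) : ExV k := Sum.inr (Sum.inl (i : Fin (k+1)))
/-- The vertex `u`. -/
def uV (k : ℕ) : ExV k := Sum.inl (Sum.inr ())
/-- The vertex `w`. -/
def wV (k : ℕ) : ExV k := Sum.inr (Sum.inr ())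

/-- The vertex set `A ∪ B`. -/
def ABset (k : ℕ) : Finset (ExV k) :=
  (Finset.univ.image fun i : Fin (k+1) => (Sum.inl (Sum.inl i) : ExV k)) ∪
  (Finset.univ.image fun i : Fin (k+1) => (Sum.inr (Sum.inl i) : ExV k))

/-- The matching `M_j = ({{aᵢ, b_{i+j}} : i ∈ {1,...,k+1}} \ {{a_j, b_{2j}}}) ∪ {{a_j,w},{b_{2j},u}}`,
indices of `b` taken modulo `k+1`. -/
def Mj (k j : ℕ) : Finset (Sym2 (ExV k)) :=
  (((Finset.range (k+1)).image fun i => s(aV k (i+1), bV k (i+1+j))) \ {s(aV k j, bV k (2*j))})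
    ∪ {s(aV k j, wV k), s(bV k (2*j), uV k)}

open Fin.NatCast in
lemma finEq (k a b : ℕ) : ((a : Fin (k+1)) = (b : Fin (k+1))) ↔ a % (k+1) = b % (k+1) := by
  rw [Fin.ext_iff, Fin.val_natCast, Fin.val_natCast]

lemma aV_eq {k a b : ℕ} : aV k a = aV k b ↔ a % (k+1) = b % (k+1) := by
  simp [aV, finEq]

lemma bV_eq {k a b : ℕ} : bV k a = bV k b ↔ a % (k+1) = b % (k+1) := by
  simp [bV, finEq]

lemma sab_eq {k a b a' b' : ℕ} :
    s(aV k a, bV k b) = s(aV k a', bV k b') ↔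
      a % (k+1) = a' % (k+1) ∧ b % (k+1) = b' % (k+1) := by
  rw [Sym2.eq_iff]
  simp [aV, bV, finEq]

lemma adj_ab {k a b : ℕ} (h : a % (k+1) ≠ b % (k+1)) :
    (exGraph k).Adj (aV k a) (bV k b) := by
  simp only [exGraph, SimpleGraph.fromRel_adj, exRel, aV, bV, ne_eq]
  refine ⟨by simp, Or.inl ?_⟩
  simp [Fin.ext_iff, Fin.val_natCast, h]

lemma adj_aw {k a : ℕ} : (exGraph k).Adj (aV k a) (wV k) := by
  simp only [exGraph, SimpleGraph.fromRel_adj, exRel, aV, wV]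
  exact ⟨by simp, Or.inl trivial⟩

lemma adj_bu {k b : ℕ} : (exGraph k).Adj (bV k b) (uV k) := by
  simp only [exGraph, SimpleGraph.fromRel_adj, exRel, bV, uV]
  exact ⟨by simp, Or.inr trivial⟩

lemma mem_Mj {k j : ℕ} {e : Sym2 (ExV k)} :
    e ∈ Mj k j ↔
      ((∃ i < k+1, s(aV k (i+1), bV k (i+1+j)) = e) ∧ e ≠ s(aV k j, bV k (2*j)))
      ∨ e = s(aV k j, wV k) ∨ e = s(bV k (2*j), uV k) := by
  simp [Mj, Finset.mem_union, Finset.mem_sdiff, Finset.mem_image, Finset.mem_range,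
    Finset.mem_insert, Finset.mem_singleton]
  exact or_rotate.symm

lemma addcan {n a b c : ℕ} : (a + c) % n = (b + c) % n ↔ a % n = b % n :=
  ⟨fun h => Nat.ModEq.add_right_cancel' c h, fun h => Nat.ModEq.add_right c h⟩

lemma addcanl {n a b c : ℕ} : (c + a) % n = (c + b) % n ↔ a % n = b % n := by
  rw [Nat.add_comm c a, Nat.add_comm c b]; exact addcan

lemma not_removed_a {k j i : ℕ} (h : s(aV k (i+1), bV k (i+1+j)) ≠ s(aV k j, bV k (2*j))) :
    (i+1) % (k+1) ≠ j % (k+1) := by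
  intro hh
  apply h
  rw [sab_eq]
  refine ⟨hh, ?_⟩
  have h2 : 2*j = j + j := by ring
  rw [h2]
  exact Nat.ModEq.add_right j hh

lemma not_removed_b {k j i : ℕ} (h : s(aV k (i+1), bV k (i+1+j)) ≠ s(aV k j, bV k (2*j))) :
    (i+1+j) % (k+1) ≠ (2*j) % (k+1) := by
  intro hh
  apply not_removed_a h
  have h2 : 2*j = j + j := by ring
  rw [h2] at hh
  exact Nat.ModEq.add_right_cancel' j hh

theorem stmt17 (k : ℕ) (hk : 1 ≤ k) (hke : Even k) :
    (∀ j, 1 ≤ j → j ≤ k →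
      IsMatchingE (exGraph k) (Mj k j) ∧ ∀ v : ExV k, ∃ e ∈ Mj k j, v ∈ e) ∧
    (∀ j j', 1 ≤ j → j ≤ k → 1 ≤ j' → j' ≤ k → j ≠ j' → Disjoint (Mj k j) (Mj k j')) := by
  have hodd : Odd (k+1) := Even.add_one hke
  constructor
  · intro j hj1 hjk
    have hjn : j % (k+1) = j := Nat.mod_eq_of_lt (by omega)
    refine ⟨⟨?_, ?_⟩, ?_⟩
    · -- edges of Mj are edges of G
      intro e he
      rw [Finset.mem_coe, mem_Mj] at he
      rcases he with ⟨⟨i, hi, rfl⟩, -⟩ | rfl | rfl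
      · refine (SimpleGraph.mem_edgeSet _).mpr (adj_ab ?_)
        intro hh
        have hh2 : (0 + (i+1)) % (k+1) = (j + (i+1)) % (k+1) := by
          rw [Nat.zero_add, Nat.add_comm j (i+1)]; exact hh
        have := addcan.mp hh2
        rw [Nat.zero_mod, hjn] at this
        omega
      · exact (SimpleGraph.mem_edgeSet _).mpr adj_aw
      · exact (SimpleGraph.mem_edgeSet _).mpr adj_bu
    · -- pairwise vertex disjoint
      intro e he f hf hef v hv
      rw [Finset.mem_coe, mem_Mj] at he hf
      rcases he with ⟨⟨i, hi, rfl⟩, hrm⟩ | rfl | rfl <;>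
        rcases hf with ⟨⟨i', hi', rfl⟩, hrm'⟩ | rfl | rfl
      · -- I vs I
        have hX : (i+1) % (k+1) ≠ (i'+1) % (k+1) := by
          intro hh
          apply hef
          rw [sab_eq]
          exact ⟨hh, Nat.ModEq.add_right j hh⟩
        have hY : (i+1+j) % (k+1) ≠ (i'+1+j) % (k+1) := fun hh =>
          hX (Nat.ModEq.add_right_cancel' j hh)
        rw [Sym2.mem_iff] at hv
        rcases hv with rfl | rfl <;> rw [Sym2.mem_iff] <;> rintro (hh | hh) <;>
          first
            | exact hX (aV_eq.mp hh)
            | exact hX (aV_eq.mp hh).symm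
            | exact hY (bV_eq.mp hh)
            | exact hY (bV_eq.mp hh).symm
            | simp [aV, bV, uV, wV] at hh
      · -- I vs W
        have hX : (i+1) % (k+1) ≠ j % (k+1) := not_removed_a hrm
        rw [Sym2.mem_iff] at hv
        rcases hv with rfl | rfl <;> rw [Sym2.mem_iff] <;> rintro (hh | hh) <;>
          first
            | exact hX (aV_eq.mp hh)
            | exact hX (aV_eq.mp hh).symm
            | simp [aV, bV, uV, wV] at hh
      · -- I vs U
        have hY : (i+1+j) % (k+1) ≠ (2*j) % (k+1) := not_removed_b hrm
        rw [Sym2.mem_iff] at hv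
        rcases hv with rfl | rfl <;> rw [Sym2.mem_iff] <;> rintro (hh | hh) <;>
          first
            | exact hY (bV_eq.mp hh)
            | exact hY (bV_eq.mp hh).symm
            | simp [aV, bV, uV, wV] at hh
      · -- W vs I
        have hX : (i'+1) % (k+1) ≠ j % (k+1) := not_removed_a hrm'
        rw [Sym2.mem_iff] at hv
        rcases hv with rfl | rfl <;> rw [Sym2.mem_iff] <;> rintro (hh | hh) <;>
          first
            | exact hX (aV_eq.mp hh)
            | exact hX (aV_eq.mp hh).symm
            | simp [aV, bV, uV, wV] at hh
      · exact absurd rfl hef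
      · -- W vs U
        rw [Sym2.mem_iff] at hv
        rcases hv with rfl | rfl <;> rw [Sym2.mem_iff] <;> rintro (hh | hh) <;>
          simp [aV, bV, uV, wV] at hh
      · -- U vs I
        have hY : (i'+1+j) % (k+1) ≠ (2*j) % (k+1) := not_removed_b hrm'
        rw [Sym2.mem_iff] at hv
        rcases hv with rfl | rfl <;> rw [Sym2.mem_iff] <;> rintro (hh | hh) <;>
          first
            | exact hY (bV_eq.mp hh)
            | exact hY (bV_eq.mp hh).symm
            | simp [aV, bV, uV, wV] at hh
      · -- U vs W
        rw [Sym2.mem_iff] at hv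
        rcases hv with rfl | rfl <;> rw [Sym2.mem_iff] <;> rintro (hh | hh) <;>
          simp [aV, bV, uV, wV] at hh
      · exact absurd rfl hef
    · -- coverage
      intro v
      rcases v with (m | u) | (m | u)
      · -- a_m
        by_cases hmj : (m : ℕ) = j % (k+1)
        · refine ⟨s(aV k j, wV k), mem_Mj.mpr (Or.inr (Or.inl rfl)), ?_⟩
          rw [Sym2.mem_iff]
          left
          open Fin.NatCast in
          have hF : ((j : ℕ) : Fin (k+1)) = m := by
            rw [Fin.ext_iff, Fin.val_natCast]; exact hmj.symm
          rw [aV, hF]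
        · set i : ℕ := if (m : ℕ) = 0 then k else (m : ℕ) - 1 with hidef
          have hik : i < k + 1 := by
            have := m.isLt; rw [hidef]; split <;> omega
          have him : (i+1) % (k+1) = (m : ℕ) := by
            rcases eq_or_ne (m : ℕ) 0 with h0 | h0
            · simp [hidef, h0, Nat.mod_self]
            · have hiv : i + 1 = (m : ℕ) := by
                have := m.isLt; rw [hidef, if_neg h0]; omega
              rw [hiv]; exact Nat.mod_eq_of_lt m.isLt
          refine ⟨s(aV k (i+1), bV k (i+1+j)), mem_Mj.mpr (Or.inl ⟨⟨i, hik, rfl⟩, ?_⟩), ?_⟩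
          · intro hh
            rw [sab_eq] at hh
            exact hmj (him ▸ hh.1)
          · rw [Sym2.mem_iff]
            left
            open Fin.NatCast in
            have hF : (((i+1 : ℕ)) : Fin (k+1)) = m := by
              rw [Fin.ext_iff, Fin.val_natCast]; exact him
            rw [aV, hF]
      · -- u
        refine ⟨s(bV k (2*j), uV k), mem_Mj.mpr (Or.inr (Or.inr rfl)), ?_⟩
        rw [Sym2.mem_iff]
        right
        rfl
      · -- b_m
        by_cases hm2j : (m : ℕ) = (2*j) % (k+1)
        · refine ⟨s(bV k (2*j), uV k), mem_Mj.mpr (Or.inr (Or.inr rfl)), ?_⟩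
          rw [Sym2.mem_iff]
          left
          open Fin.NatCast in
          have hF : ((2*j : ℕ) : Fin (k+1)) = m := by
            rw [Fin.ext_iff, Fin.val_natCast]; exact hm2j.symm
          rw [bV, hF]
        · set t : ℕ := ((m : ℕ) + (k+1) - j) % (k+1) with htdef
          have ht : t < k+1 := Nat.mod_lt _ (by omega)
          set i : ℕ := if t = 0 then k else t - 1 with hidef
          have hik : i < k + 1 := by
            rw [hidef]; split <;> omega
          have his : (i+1) % (k+1) = t := by
            rcases eq_or_ne t 0 with h0 | h0
            · simp [hidef, h0, Nat.mod_self]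
            · have hiv : i + 1 = t := by rw [hidef, if_neg h0]; omega
              rw [hiv]; exact Nat.mod_eq_of_lt ht
          have hbm : (i+1+j) % (k+1) = (m : ℕ) := by
            have h1 : (i+1+j) % (k+1) = ((i+1) % (k+1) + j) % (k+1) := by
              rw [Nat.mod_add_mod]
            rw [h1, his, htdef, Nat.mod_add_mod]
            have h2 : (m : ℕ) + (k+1) - j + j = (m : ℕ) + (k+1) := by omega
            rw [h2, Nat.add_mod_right]
            exact Nat.mod_eq_of_lt m.isLt
          refine ⟨s(aV k (i+1), bV k (i+1+j)), mem_Mj.mpr (Or.inl ⟨⟨i, hik, rfl⟩, ?_⟩), ?_⟩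
          · intro hh
            rw [sab_eq] at hh
            exact hm2j (hbm ▸ hh.2)
          · rw [Sym2.mem_iff]
            right
            open Fin.NatCast in
            have hF : (((i+1+j : ℕ)) : Fin (k+1)) = m := by
              rw [Fin.ext_iff, Fin.val_natCast]; exact hbm
            rw [bV, hF]
      · -- w
        refine ⟨s(aV k j, wV k), mem_Mj.mpr (Or.inr (Or.inl rfl)), ?_⟩
        rw [Sym2.mem_iff]
        right
        rfl
  · -- pairwise disjointness of the matchings
    intro j j' hj1 hjk hj'1 hj'k hne
    have hjn : j % (k+1) = j := Nat.mod_eq_of_lt (by omega)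
    have hj'n : j' % (k+1) = j' := Nat.mod_eq_of_lt (by omega)
    rw [Finset.disjoint_left]
    intro e he he'
    rw [mem_Mj] at he he'
    rcases he with ⟨⟨i, hi, rfl⟩, -⟩ | rfl | rfl <;>
      rcases he' with ⟨⟨i', hi', heq⟩, -⟩ | heq | heq
    · -- I vs I
      rw [sab_eq] at heq
      obtain ⟨h1, h2⟩ := heq
      have h3 : (i'+1+j') % (k+1) = (i+1+j') % (k+1) := addcan.mpr h1
      have h4 : (i+1+j) % (k+1) = (i+1+j') % (k+1) := h2.symm.trans h3
      have h5 : j % (k+1) = j' % (k+1) := addcanl.mp h4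
      rw [hjn, hj'n] at h5
      exact hne h5
    · rw [Sym2.eq_iff] at heq
      simp [aV, bV, wV] at heq
    · rw [Sym2.eq_iff] at heq
      simp [aV, bV, uV] at heq
    · rw [Sym2.eq_iff] at heq
      simp [aV, bV, wV] at heq
    · -- W vs W
      rw [Sym2.eq_iff] at heq
      simp only [aV, wV, Sum.inl.injEq, Sum.inr.injEq, finEq] at heq
      rcases heq with ⟨h1, -⟩ | ⟨h1, -⟩
      · rw [hjn, hj'n] at h1; exact hne h1
      · exact absurd h1 (by simp)
    · rw [Sym2.eq_iff] at heq
      simp [aV, uV, wV, bV] at heq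
    · rw [Sym2.eq_iff] at heq
      simp [aV, bV, uV] at heq
    · rw [Sym2.eq_iff] at heq
      simp [aV, uV, wV, bV] at heq
    · -- U vs U
      rw [Sym2.eq_iff] at heq
      simp only [bV, uV, Sum.inl.injEq, Sum.inr.injEq, finEq] at heq
      rcases heq with ⟨h1, -⟩ | ⟨h1, -⟩
      · have hg : Nat.gcd (k+1) 2 = 1 := Nat.coprime_two_right.mpr hodd
        have h2 : j % (k+1) = j' % (k+1) := Nat.ModEq.cancel_left_of_coprime hg h1
        rw [hjn, hj'n] at h2
        exact hne h2
      · exact absurd h1 (by simp)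
end

section
/- The approximation bound 1 + k/(k+2) is tight: for every even k ≥ 2 there exists a bipartite graph G and a valid execution of the iterated matching-removal algorithm (removing k maximum matchings, then taking a maximum independent set of the residual graph) whose output S satisfies |I*_k| / |S| = 2(k+1)/(k+2) = 1 + k/(k+2), where I*_k is a maximum k-dependent set of G. -/
open scoped Classical

open Fin.NatCast Fin.CommRing

namespace Stmt19Aux

/-- vertex `aⱼ` with `Fin` index -/
def av (k : ℕ) (j : Fin (k+1)) : ExV k := Sum.inl (Sum.inl j)
def bv (k : ℕ) (j : Fin (k+1)) : ExV k := Sum.inr (Sum.inl j)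

def mEdge (k : ℕ) (i j : Fin (k+1)) : Sym2 (ExV k) := s(av k j, bv k (2*i - j))

/-- the matching removed in round `i` (for `i ≤ k`). -/
def MM (k : ℕ) (i : ℕ) : Finset (Sym2 (ExV k)) :=
  insert s(uV k, bV k i)
    (insert s(wV k, aV k i)
      ((Finset.univ.filter fun j : Fin (k+1) => j ≠ (i : Fin (k+1))).image
        (mEdge k (i : Fin (k+1)))))

variable {k : ℕ}

lemma two_mul_inj (hke : Even k) {x y : Fin (k+1)} (h : 2*x = 2*y) : x = y := by
  have hc : Nat.Coprime 2 (k+1) := by rw [Nat.coprime_two_left]; exact hke.add_one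
  have hu : IsUnit (2 : ZMod (k+1)) := by
    refine ⟨ZMod.unitOfCoprime 2 hc, ?_⟩
    simp [ZMod.coe_unitOfCoprime]
  exact hu.mul_left_cancel h

lemma natCast_inj {i i' : ℕ} (hi : i ≤ k) (hi' : i' ≤ k)
    (h : (i : Fin (k+1)) = (i' : Fin (k+1))) : i = i' := by
  have h1 := Fin.val_cast_of_lt (Nat.lt_succ_of_le hi)
  have h2 := Fin.val_cast_of_lt (Nat.lt_succ_of_le hi')
  rw [← h1, ← h2, h]

lemma sub_eq_self_iff (i j : Fin (k+1)) : 2*i - j = i ↔ j = i := by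
  constructor
  · intro h
    have h2 : i + i = i + j := by
      have := sub_eq_iff_eq_add.mp h
      rwa [two_mul] at this
    exact (add_left_cancel h2).symm
  · rintro rfl; rw [two_mul]; ring

lemma mem_MM {e : Sym2 (ExV k)} {i : ℕ} :
    e ∈ MM k i ↔ e = s(uV k, bV k i) ∨ e = s(wV k, aV k i) ∨
      ∃ j : Fin (k+1), j ≠ (i : Fin (k+1)) ∧ e = mEdge k (i : Fin (k+1)) j := by
  simp [MM, Finset.mem_insert, Finset.mem_image, Finset.mem_filter, eq_comm]

lemma exGraph_adj_ab {i j : Fin (k+1)} : (exGraph k).Adj (av k i) (bv k j) ↔ i ≠ j := by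
  constructor
  · rintro ⟨hne, h | h⟩
    · exact h
    · exact absurd h (by simp [exRel, av, bv])
  · intro h
    refine ⟨by simp [av, bv], Or.inl ?_⟩
    exact h

lemma exGraph_adj_aw {i : Fin (k+1)} : (exGraph k).Adj (av k i) (wV k) := by
  exact ⟨by simp [av, wV], Or.inl (by simp [exRel, av, wV])⟩

lemma exGraph_adj_ub {j : Fin (k+1)} : (exGraph k).Adj (uV k) (bv k j) := by
  exact ⟨by simp [uV, bv], Or.inl (by simp [exRel, uV, bv])⟩

lemma exGraph_adj_uw : (exGraph k).Adj (uV k) (wV k) := by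
  exact ⟨by simp [uV, wV], Or.inl (by simp [exRel, uV, wV])⟩

lemma not_adj_ll {x y : Fin (k+1) ⊕ Unit} :
    ¬ (exGraph k).Adj (Sum.inl x) (Sum.inl y) := by
  rintro ⟨hne, h | h⟩ <;> exact (by simp [exRel] at h)

lemma not_adj_rr {x y : Fin (k+1) ⊕ Unit} :
    ¬ (exGraph k).Adj (Sum.inr x) (Sum.inr y) := by
  rintro ⟨hne, h | h⟩ <;> exact (by simp [exRel] at h)

end Stmt19Aux

namespace Stmt19Aux

variable {k : ℕ}

lemma aV_eq (i : ℕ) : aV k i = av k (i : Fin (k+1)) := rfl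
lemma bV_eq (i : ℕ) : bV k i = bv k (i : Fin (k+1)) := rfl

lemma MM_disj (hke : Even k) {i i' : ℕ} (hi : i ≤ k) (hi' : i' ≤ k) (hne : i ≠ i')
    {e : Sym2 (ExV k)} (he : e ∈ MM k i) (he' : e ∈ MM k i') : False := by
  have hfin : (i : Fin (k+1)) ≠ (i' : Fin (k+1)) := fun h => hne (natCast_inj hi hi' h)
  rw [mem_MM] at he he'
  rcases he with rfl | rfl | ⟨j, hj, rfl⟩ <;> rcases he' with h | h | ⟨j', hj', h⟩ <;>
    simp only [mEdge, uV, wV, aV, bV, av, bv, Sym2.eq_iff, Sum.inl.injEq, Sum.inr.injEq,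
      reduceCtorEq, and_false, false_and, or_false, false_or, and_true, true_and, or_self] at h
  · exact hfin h
  · exact hfin h
  · rcases h with ⟨rfl, h2⟩
    exact hfin (two_mul_inj hke (by rwa [sub_left_inj] at h2))

lemma MM_mem_exGraph {i : ℕ} (hke : Even k) {e : Sym2 (ExV k)} (he : e ∈ MM k i) :
    e ∈ (exGraph k).edgeSet := by
  rw [mem_MM] at he
  rcases he with rfl | rfl | ⟨j, hj, rfl⟩
  · exact (SimpleGraph.mem_edgeSet _).2 (bV_eq i ▸ exGraph_adj_ub)
  · exact (SimpleGraph.mem_edgeSet _).2 (aV_eq i ▸ exGraph_adj_aw.symm)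
  · refine (SimpleGraph.mem_edgeSet _).2 (exGraph_adj_ab.2 fun h => hj ?_)
    have : j + j = 2 * (i : Fin (k+1)) := by
      rw [eq_comm, sub_eq_iff_eq_add] at h
      exact h.symm
    exact two_mul_inj hke (by rw [← two_mul] at this; exact this)

lemma MM_isMatching (hke : Even k) {i : ℕ} (hi : i ≤ k) :
    IsMatchingE (resid (exGraph k) (MM k) i) (MM k i) := by
  constructor
  · intro e he
    rw [Finset.mem_coe] at he
    rw [resid, SimpleGraph.edgeSet_deleteEdges]
    refine ⟨MM_mem_exGraph hke he, ?_⟩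
    simp only [Set.mem_iUnion, Set.mem_Iio, Finset.mem_coe, not_exists]
    intro j hj hmem
    exact MM_disj hke (hj.le.trans hi) hi hj.ne hmem he
  · intro e he f hf hef v hv hv'
    rw [Finset.mem_coe, mem_MM] at he hf
    rcases he with rfl | rfl | ⟨j, hj, rfl⟩ <;> rcases hf with rfl | rfl | ⟨j', hj', rfl⟩ <;>
      simp only [mEdge, uV, wV, aV, bV, av, bv, Sym2.mem_iff, Sum.inl.injEq, Sum.inr.injEq,
        reduceCtorEq, or_false, false_or, or_self] at hv hv'
    all_goals
      try first
      | exact hef rfl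
      | (rcases hv with rfl | rfl <;> rcases hv' with h | h <;>
          first
          | exact hj' ((sub_eq_self_iff _ _).1 h.symm)
          | exact hj ((sub_eq_self_iff _ _).1 h)
          | exact hj' ((sub_eq_self_iff _ _).1 h)
          | exact hj ((sub_eq_self_iff _ _).1 h.symm)
          | exact hj' h.symm
          | exact hj' h
          | exact hj h
          | exact hj h.symm
          | (rw [h] at hef; exact hef rfl)
          | (rw [sub_right_inj.mp h] at hef; exact hef rfl)
          | simp at h)
    all_goals
      first
      | exact hj' h.symm
      | exact hj h
      | (rw [h] at hef; exact hef rfl)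
      | exact hj ((sub_eq_self_iff _ _).1 h)
      | exact hj' ((sub_eq_self_iff _ _).1 h.symm)
end Stmt19Aux

namespace Stmt19Aux

variable {k : ℕ}

lemma bv_inj : Function.Injective (bv k) := by
  intro a b h; simpa [bv] using h

lemma av_inj : Function.Injective (av k) := by
  intro a b h; simpa [av] using h

lemma MM_card (i : ℕ) : (MM k i).card = k + 2 := by
  have hinj : Set.InjOn (mEdge k (i : Fin (k+1)))
      ((Finset.univ.filter fun j : Fin (k+1) => j ≠ (i : Fin (k+1))) : Finset (Fin (k+1))) := by
    intro x _ y _ hxy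
    simpa [mEdge, av, bv, Sym2.eq_iff] using hxy
  have h1 : ((Finset.univ.filter fun j : Fin (k+1) => j ≠ (i : Fin (k+1))).image
      (mEdge k (i : Fin (k+1)))).card = k := by
    rw [Finset.card_image_of_injOn hinj, Finset.filter_ne',
      Finset.card_erase_of_mem (Finset.mem_univ _), Finset.card_univ, Fintype.card_fin]
    omega
  have h3 : s(wV k, aV k i) ∉ (Finset.univ.filter fun j : Fin (k+1) => j ≠ (i : Fin (k+1))).image
      (mEdge k (i : Fin (k+1))) := by
    simp [mEdge, Sym2.eq_iff, wV, aV, av, bv]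
  have h2 : s(uV k, bV k i) ∉ insert s(wV k, aV k i)
      ((Finset.univ.filter fun j : Fin (k+1) => j ≠ (i : Fin (k+1))).image
        (mEdge k (i : Fin (k+1)))) := by
    simp [mEdge, Sym2.eq_iff, uV, wV, aV, bV, av, bv]
  rw [MM, Finset.card_insert_of_notMem h2, Finset.card_insert_of_notMem h3, h1]

lemma fintype_card_ExV : Fintype.card (ExV k) = 2*k+4 := by
  simp; omega

lemma matching_card_le {H : SimpleGraph (ExV k)} {M' : Finset (Sym2 (ExV k))}
    (h : IsMatchingE H M') : M'.card ≤ k + 2 := by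
  classical
  set F : Sym2 (ExV k) → Finset (ExV k) := fun e => {e.out.1, e.out.2} with hF
  have hmemF : ∀ e : Sym2 (ExV k), ∀ v ∈ F e, v ∈ e := by
    intro e v hv
    rcases Finset.mem_insert.mp hv with rfl | hv
    · exact Sym2.out_fst_mem e
    · rw [Finset.mem_singleton] at hv; subst hv; exact Sym2.out_snd_mem e
  have hcard2 : ∀ e ∈ M', (F e).card = 2 := by
    intro e he
    have he' : s(e.out.1, e.out.2) = e := by
      exact e.out_eq
    have hadj : H.Adj e.out.1 e.out.2 := by
      rw [← SimpleGraph.mem_edgeSet, he']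
      exact h.1 he
    exact Finset.card_pair hadj.ne
  have hdisj : ∀ x ∈ M', ∀ y ∈ M', x ≠ y → Disjoint (F x) (F y) := by
    intro x hx y hy hxy
    rw [Finset.disjoint_left]
    intro a hax hay
    exact h.2 hx hy hxy a (hmemF _ _ hax) (hmemF _ _ hay)
  have hbi : (M'.biUnion F).card = ∑ e ∈ M', (F e).card := Finset.card_biUnion hdisj
  have hsum : ∑ e ∈ M', (F e).card = 2 * M'.card := by
    rw [Finset.sum_congr rfl hcard2, Finset.sum_const, smul_eq_mul, mul_comm]
  have hle : (M'.biUnion F).card ≤ 2*k+4 := by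
    rw [← fintype_card_ExV]; exact Finset.card_le_univ _
  omega

lemma adj_of_mem_edge {V : Type*} {H : SimpleGraph V} {e : Sym2 V} {x y : V}
    (he : e ∈ H.edgeSet) (hx : x ∈ e) (hy : y ∈ e) (hxy : x ≠ y) : H.Adj x y := by
  induction e using Sym2.ind with
  | _ a b =>
    rw [Sym2.mem_iff] at hx hy
    rw [SimpleGraph.mem_edgeSet] at he
    rcases hx with rfl | rfl <;> rcases hy with rfl | rfl
    · exact absurd rfl hxy
    · exact he
    · exact he.symm
    · exact absurd rfl hxy

/-- the output independent set: the whole left side. -/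
def Sleft (k : ℕ) : Finset (ExV k) := Finset.univ.image Sum.inl

lemma Sleft_card : (Sleft k).card = k + 2 := by
  rw [Sleft, Finset.card_image_of_injective _ Sum.inl_injective, Finset.card_univ]
  simp

lemma Sleft_indep (i : ℕ) : IsIndepF (resid (exGraph k) (MM k) i) (Sleft k) := by
  intro v hv w hw hadj
  simp only [Sleft, Finset.mem_image, Finset.mem_univ, true_and] at hv hw
  obtain ⟨x, rfl⟩ := hv
  obtain ⟨y, rfl⟩ := hw
  rw [resid, SimpleGraph.deleteEdges_adj] at hadj
  exact not_adj_ll hadj.1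

/-- perfect matching assignment in the residual graph -/
def pmV (k : ℕ) : ExV k → Sym2 (ExV k)
  | Sum.inl (Sum.inr _) => s(uV k, bV k k)
  | Sum.inr (Sum.inr _) => s(wV k, aV k k)
  | Sum.inl (Sum.inl j) =>
      if j = (k : Fin (k+1)) then s(wV k, aV k k) else mEdge k (k : Fin (k+1)) j
  | Sum.inr (Sum.inl l) =>
      if l = (k : Fin (k+1)) then s(uV k, bV k k)
      else mEdge k (k : Fin (k+1)) (2*(k : Fin (k+1)) - l)

lemma pmV_mem_MM (v : ExV k) : pmV k v ∈ MM k k := by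
  rw [mem_MM]
  match v with
  | Sum.inl (Sum.inr x) => exact Or.inl rfl
  | Sum.inr (Sum.inr x) => exact Or.inr (Or.inl rfl)
  | Sum.inl (Sum.inl j) =>
    by_cases hj : j = (k : Fin (k+1))
    · refine Or.inr (Or.inl ?_); rw [pmV, if_pos hj]
    · exact Or.inr (Or.inr ⟨j, hj, by rw [pmV, if_neg hj]⟩)
  | Sum.inr (Sum.inl l) =>
    by_cases hl : l = (k : Fin (k+1))
    · refine Or.inl ?_; rw [pmV, if_pos hl]
    · refine Or.inr (Or.inr ⟨2*(k : Fin (k+1)) - l,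
        fun hcon => hl ((sub_eq_self_iff _ _).1 hcon), by rw [pmV, if_neg hl]⟩)

lemma mem_pmV (v : ExV k) : v ∈ pmV k v := by
  match v with
  | Sum.inl (Sum.inr x) => cases x; rw [pmV]; exact Sym2.mem_mk_left _ _
  | Sum.inr (Sum.inr x) => cases x; rw [pmV]; exact Sym2.mem_mk_left _ _
  | Sum.inl (Sum.inl j) =>
    by_cases hj : j = (k : Fin (k+1))
    · rw [pmV, if_pos hj, hj]; exact Sym2.mem_mk_right _ _
    · rw [pmV, if_neg hj]; exact Sym2.mem_mk_left _ _
  | Sum.inr (Sum.inl l) =>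
    by_cases hl : l = (k : Fin (k+1))
    · rw [pmV, if_pos hl, hl]; exact Sym2.mem_mk_right _ _
    · rw [pmV, if_neg hl, mEdge, sub_sub_cancel]; exact Sym2.mem_mk_right _ _

lemma indep_card_le (hke : Even k) {S' : Finset (ExV k)}
    (h : IsIndepF (resid (exGraph k) (MM k) k) S') : S'.card ≤ k + 2 := by
  have hM := MM_isMatching hke (le_refl k)
  have hmain : S'.card ≤ (MM k k).card := by
    refine Finset.card_le_card_of_injOn (pmV k) (fun v _ => pmV_mem_MM v) ?_
    intro v1 hv1 v2 hv2 heq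
    by_contra hne
    have he : pmV k v1 ∈ (resid (exGraph k) (MM k) k).edgeSet :=
      hM.1 (Finset.mem_coe.2 (pmV_mem_MM v1))
    have hm2 : v2 ∈ pmV k v1 := by rw [heq]; exact mem_pmV v2
    exact h v1 hv1 v2 hv2 (adj_of_mem_edge he (mem_pmV v1) hm2 hne)
  rw [MM_card] at hmain
  exact hmain

lemma AB_card : (ABset k).card = 2*k+2 := by
  have hd : Disjoint (Finset.univ.image fun i : Fin (k+1) => (Sum.inl (Sum.inl i) : ExV k))
      (Finset.univ.image fun i : Fin (k+1) => (Sum.inr (Sum.inl i) : ExV k)) := by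
    rw [Finset.disjoint_left]
    intro a ha hb
    simp only [Finset.mem_image, Finset.mem_univ, true_and] at ha hb
    obtain ⟨x, rfl⟩ := ha
    obtain ⟨y, hy⟩ := hb
    exact absurd hy (by simp)
  rw [ABset, Finset.card_union_of_disjoint hd,
    Finset.card_image_of_injective _ (fun a b h => by simpa using h),
    Finset.card_image_of_injective _ (fun a b h => by simpa using h),
    Finset.card_univ, Fintype.card_fin]
  omega

lemma AB_kdep : KDepSet (exGraph k) k (ABset k) := by
  intro v hv
  simp only [ABset, Finset.mem_union, Finset.mem_image, Finset.mem_univ, true_and] at hv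
  have hcard : ∀ i0 : Fin (k+1), ((Finset.univ : Finset (Fin (k+1))).erase i0).card = k := by
    intro i0
    rw [Finset.card_erase_of_mem (Finset.mem_univ _), Finset.card_univ, Fintype.card_fin]
    omega
  rcases hv with ⟨i0, rfl⟩ | ⟨i0, rfl⟩
  · have hsub : ((ABset k).filter fun x => (exGraph k).Adj (Sum.inl (Sum.inl i0)) x) ⊆
        (Finset.univ.erase i0).image (bv k) := by
      intro x hx
      rw [Finset.mem_filter] at hx
      obtain ⟨hx1, hx2⟩ := hx
      simp only [ABset, Finset.mem_union, Finset.mem_image, Finset.mem_univ, true_and] at hx1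
      rcases hx1 with ⟨j0, rfl⟩ | ⟨j0, rfl⟩
      · exact absurd hx2 not_adj_ll
      · have hne : i0 ≠ j0 := exGraph_adj_ab.mp hx2
        exact Finset.mem_image.2 ⟨j0, Finset.mem_erase.2 ⟨hne.symm, Finset.mem_univ _⟩, rfl⟩
    calc ((ABset k).filter fun x => (exGraph k).Adj (Sum.inl (Sum.inl i0)) x).card
        ≤ ((Finset.univ.erase i0).image (bv k)).card := Finset.card_le_card hsub
      _ ≤ (Finset.univ.erase i0).card := Finset.card_image_le
      _ = k := hcard i0
  · have hsub : ((ABset k).filter fun x => (exGraph k).Adj (Sum.inr (Sum.inl i0)) x) ⊆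
        (Finset.univ.erase i0).image (av k) := by
      intro x hx
      rw [Finset.mem_filter] at hx
      obtain ⟨hx1, hx2⟩ := hx
      simp only [ABset, Finset.mem_union, Finset.mem_image, Finset.mem_univ, true_and] at hx1
      rcases hx1 with ⟨j0, rfl⟩ | ⟨j0, rfl⟩
      · have hne : j0 ≠ i0 := exGraph_adj_ab.mp hx2.symm
        exact Finset.mem_image.2 ⟨j0, Finset.mem_erase.2 ⟨hne, Finset.mem_univ _⟩, rfl⟩
      · exact absurd hx2 not_adj_rr
    calc ((ABset k).filter fun x => (exGraph k).Adj (Sum.inr (Sum.inl i0)) x).card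
        ≤ ((Finset.univ.erase i0).image (av k)).card := Finset.card_le_card hsub
      _ ≤ (Finset.univ.erase i0).card := Finset.card_image_le
      _ = k := hcard i0

lemma kdep_card_le (T : Finset (ExV k)) (hT : KDepSet (exGraph k) k T) : T.card ≤ 2*k+2 := by
  by_contra hlt
  push_neg at hlt
  have hTuniv : T.card ≤ 2*k+4 := by rw [← fintype_card_ExV]; exact Finset.card_le_univ _
  have hcompl : Tᶜ.card ≤ 1 := by
    rw [Finset.card_compl, fintype_card_ExV]; omega
  have huw : uV k ∈ T ∨ wV k ∈ T := by
    by_contra hc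
    push_neg at hc
    have hss : ({uV k, wV k} : Finset (ExV k)) ⊆ Tᶜ := by
      intro x hx
      rcases Finset.mem_insert.mp hx with rfl | hx
      · exact Finset.mem_compl.2 hc.1
      · rw [Finset.mem_singleton] at hx; subst hx; exact Finset.mem_compl.2 hc.2
    have h2 : ({uV k, wV k} : Finset (ExV k)).card = 2 :=
      Finset.card_pair (by simp [uV, wV])
    have := Finset.card_le_card hss
    omega
  rcases huw with hu | hw
  · set N : Finset (ExV k) := insert (wV k) (Finset.univ.image (bv k)) with hN
    have hNcard : N.card = k + 2 := by
      rw [hN, Finset.card_insert_of_notMem (by simp [wV, bv]),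
        Finset.card_image_of_injective _ bv_inj, Finset.card_univ, Fintype.card_fin]
    have hNadj : ∀ x ∈ N, (exGraph k).Adj (uV k) x := by
      intro x hx
      rcases Finset.mem_insert.mp hx with rfl | hx
      · exact exGraph_adj_uw
      · simp only [Finset.mem_image, Finset.mem_univ, true_and] at hx
        obtain ⟨j, rfl⟩ := hx
        exact exGraph_adj_ub
    have hsub : N \ Tᶜ ⊆ T.filter fun x => (exGraph k).Adj (uV k) x := by
      intro x hx
      rw [Finset.mem_sdiff] at hx
      rw [Finset.mem_filter]
      exact ⟨by simpa using hx.2, hNadj x hx.1⟩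
    have h1 := Finset.le_card_sdiff Tᶜ N
    have h2 := Finset.card_le_card hsub
    have h3 := hT (uV k) hu
    omega
  · set N : Finset (ExV k) := insert (uV k) (Finset.univ.image (av k)) with hN
    have hNcard : N.card = k + 2 := by
      rw [hN, Finset.card_insert_of_notMem (by simp [uV, av]),
        Finset.card_image_of_injective _ av_inj, Finset.card_univ, Fintype.card_fin]
    have hNadj : ∀ x ∈ N, (exGraph k).Adj (wV k) x := by
      intro x hx
      rcases Finset.mem_insert.mp hx with rfl | hx
      · exact exGraph_adj_uw.symm
      · simp only [Finset.mem_image, Finset.mem_univ, true_and] at hx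
        obtain ⟨j, rfl⟩ := hx
        exact exGraph_adj_aw.symm
    have hsub : N \ Tᶜ ⊆ T.filter fun x => (exGraph k).Adj (wV k) x := by
      intro x hx
      rw [Finset.mem_sdiff] at hx
      rw [Finset.mem_filter]
      exact ⟨by simpa using hx.2, hNadj x hx.1⟩
    have h1 := Finset.le_card_sdiff Tᶜ N
    have h2 := Finset.card_le_card hsub
    have h3 := hT (wV k) hw
    omega

lemma exGraph_colorable : (exGraph k).Colorable 2 := by
  refine ⟨SimpleGraph.Coloring.mk (Sum.elim (fun _ => (0 : Fin 2)) fun _ => 1) ?_⟩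
  intro v w hadj
  match v, w with
  | Sum.inl x, Sum.inl y => exact absurd hadj not_adj_ll
  | Sum.inr x, Sum.inr y => exact absurd hadj not_adj_rr
  | Sum.inl x, Sum.inr y => simp
  | Sum.inr x, Sum.inl y => simp

end Stmt19Aux


open Stmt19Aux

theorem stmt19 (k : ℕ) (hk : 2 ≤ k) (hke : Even k) :
    ∃ (M : ℕ → Finset (Sym2 (ExV k))) (S Istar : Finset (ExV k)),
      (exGraph k).Colorable 2 ∧
      (∀ i < k, IsMaxMatchingE (resid (exGraph k) M i) (M i)) ∧
      IsMaxIndepF (resid (exGraph k) M k) S ∧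
      KDepSet (exGraph k) k Istar ∧
      (∀ T, KDepSet (exGraph k) k T → T.card ≤ Istar.card) ∧
      (Istar.card : ℝ) / S.card = 2 * (k+1) / (k+2) ∧
      (2 * (k+1) : ℝ) / (k+2) = 1 + k / (k+2) := by
  refine ⟨MM k, Sleft k, ABset k, exGraph_colorable, ?_, ?_, AB_kdep, ?_, ?_, ?_⟩
  · intro i hi
    exact ⟨MM_isMatching hke hi.le, fun M' hM' => by
      rw [MM_card]; exact matching_card_le hM'⟩
  · exact ⟨Sleft_indep k, fun S' hS' => by
      rw [Sleft_card]; exact indep_card_le hke hS'⟩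
  · intro T hT
    rw [AB_card]; exact kdep_card_le T hT
  · rw [AB_card, Sleft_card]
    push_cast
    ring
  · have hne : (k : ℝ) + 2 ≠ 0 := by positivity
    field_simp
    ring
end
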